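/- Let X be a Hausdorff topological space and suppose that for every x₀ ∈ X there exists a continuous bounded function h : X → ℝ₊ with h(x₀) = 0 that attains its strong minimum on X at x₀ (with min_X h = 0). Then for each x₀, the sets Lₙ := {x ∈ X : h(x) < 1/n}, n ≥ 1 (where h is the corresponding function for x₀), form a countable local base of neighbourhoods at x₀; in particular X satisfies the first axiom of countability. -/
import Mathlib


open Filter Topology BoundedContinuousFunction

/-- `x₀` is a strong minimum of the real-valued function `g` on `X`: `g` attains its
minimum on `X` uniquely at `x₀`, and every minimizing sequence converges to `x₀`. -/
def StrongMinAtReal {X : Type*} [TopologicalSpace X] (g : X → ℝ) (x₀ : X) : Prop :=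
  (∀ x, g x₀ ≤ g x) ∧ (∀ x, g x = g x₀ → x = x₀) ∧
  ∀ u : ℕ → X, Tendsto (fun n => g (u n)) atTop (𝓝 (⨅ x, g x)) →
    Tendsto u atTop (𝓝 x₀)

/-- **(Second part of the proof of Theorem 2.4.)**  Let `X` be Hausdorff and suppose
that for every `x₀ ∈ X` there is a continuous bounded `h : X → ℝ₊` with `h x₀ = 0`
attaining its strong minimum on `X` at `x₀` (so `min_X h = 0`).  Then for each `x₀`
and each such corresponding `h`, the sets `Lₙ = {x : h x < 1/n}`, `n ≥ 1`, form a
countable local base of neighbourhoods at `x₀`; in particular `X` is first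
countable. -/
theorem firstCountable_of_strong_minima
    {X : Type*} [TopologicalSpace X] [T2Space X]
    (H : ∀ x₀ : X, ∃ h : X →ᵇ ℝ, (∀ x, 0 ≤ h x) ∧ h x₀ = 0 ∧
      (⨅ x, h x) = 0 ∧ StrongMinAtReal (fun x => h x) x₀) :
    (∀ (x₀ : X) (h : X →ᵇ ℝ), (∀ x, 0 ≤ h x) → h x₀ = 0 →
      (⨅ x, h x) = 0 → StrongMinAtReal (fun x => h x) x₀ →
      (𝓝 x₀).HasBasis (fun n : ℕ => 0 < n) (fun n => {x | h x < 1 / (n : ℝ)})) ∧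
    FirstCountableTopology X := by
  have main : ∀ (x₀ : X) (h : X →ᵇ ℝ), (∀ x, 0 ≤ h x) → h x₀ = 0 →
      (⨅ x, h x) = 0 → StrongMinAtReal (fun x => h x) x₀ →
      (𝓝 x₀).HasBasis (fun n : ℕ => 0 < n) (fun n => {x | h x < 1 / (n : ℝ)}) := by
    intro x₀ h hpos hx0 hinf hstrong
    constructor
    intro t
    constructor
    · intro ht
      by_contra hcon
      push_neg at hcon
      simp only [Set.not_subset] at hcon
      choose u hu1 hu2 using fun n : ℕ => hcon (n + 1) (Nat.succ_pos n)
      have hlim : Tendsto (fun n => h (u n)) atTop (𝓝 (⨅ x, h x)) := by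
        rw [hinf]
        refine squeeze_zero (fun n => hpos _) (fun n => (hu1 n).le) ?_
        have : Tendsto (fun n : ℕ => 1 / ((n : ℝ) + 1)) atTop (𝓝 0) :=
          tendsto_one_div_add_atTop_nhds_zero_nat
        simpa using this
      have := hstrong.2.2 u hlim
      have := (this.eventually_mem ht).exists
      obtain ⟨n, hn⟩ := this
      exact hu2 n hn
    · rintro ⟨n, hn, hsub⟩
      refine mem_of_superset ?_ hsub
      refine IsOpen.mem_nhds ?_ ?_
      · exact isOpen_lt h.continuous continuous_const
      · simp only [Set.mem_setOf_eq, hx0]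
        positivity
  refine ⟨main, ⟨fun a => ?_⟩⟩
  obtain ⟨h, h1, h2, h3, h4⟩ := H a
  exact (main a h h1 h2 h3 h4).isCountablyGenerated
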